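/- Keeping one representative unit-length interval per integer slot yields a 2-approximation: if S is a finite set of unit-length intervals and T ⊆ S contains, for each integer r with some interval of S having left endpoint in [r, r+1), exactly one such interval, then T contains a pairwise disjoint subfamily M with |OPT(S)| ≤ 2|M|, where OPT(S) is a maximum pairwise disjoint subset of S. -/
import Mathlib

lemma gap_disjoint {x y : ℝ} (h : x + 1 < y) :
    Set.Icc x (x + 1) ∩ Set.Icc y (y + 1) = ∅ := by
  rw [Set.eq_empty_iff_forall_notMem]
  rintro z ⟨⟨_, h1⟩, ⟨h2, _⟩⟩
  linarith

lemma far_disjoint {x y : ℝ} (h : ⌊x⌋ + 2 ≤ ⌊y⌋) :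
    Set.Icc x (x + 1) ∩ Set.Icc y (y + 1) = ∅ := by
  apply gap_disjoint
  have h1 : x < (⌊x⌋ : ℝ) + 1 := Int.lt_floor_add_one x
  have h2 : ((⌊y⌋ : ℝ)) ≤ y := Int.floor_le y
  have : ((⌊x⌋ : ℝ)) + 2 ≤ (⌊y⌋ : ℝ) := by exact_mod_cast h
  linarith

lemma parity_disjoint {x y : ℝ} (hne : ⌊x⌋ ≠ ⌊y⌋)
    (hpar : (⌊x⌋ % 2) = (⌊y⌋ % 2)) :
    Set.Icc x (x + 1) ∩ Set.Icc y (y + 1) = ∅ := by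
  rcases lt_or_gt_of_ne hne with h | h
  · exact far_disjoint (by omega)
  · rw [Set.inter_comm]; exact far_disjoint (by omega)

theorem stmt_5 (S T OPT : Finset ℝ) (hTS : T ⊆ S)
    (hcover : T.image (fun x : ℝ => ⌊x⌋) = S.image (fun x : ℝ => ⌊x⌋))
    (hone : Set.InjOn (fun x : ℝ => ⌊x⌋) T)
    (hOPTsub : OPT ⊆ S)
    (hOPTdisj : ∀ x ∈ OPT, ∀ y ∈ OPT, x ≠ y →
      Set.Icc x (x + 1) ∩ Set.Icc y (y + 1) = ∅)
    (hOPTmax : ∀ U ⊆ S, (∀ x ∈ U, ∀ y ∈ U, x ≠ y →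
      Set.Icc x (x + 1) ∩ Set.Icc y (y + 1) = ∅) → U.card ≤ OPT.card) :
    ∃ M ⊆ T, (∀ x ∈ M, ∀ y ∈ M, x ≠ y →
      Set.Icc x (x + 1) ∩ Set.Icc y (y + 1) = ∅) ∧
      OPT.card ≤ 2 * M.card := by
  -- floor is injective on OPT
  have hinjOPT : Set.InjOn (fun x : ℝ => ⌊x⌋) OPT := by
    intro x hx y hy hxy
    by_contra hne
    have hdisj := hOPTdisj x (by simpa using hx) y (by simpa using hy) hne
    have hx1 : x < y + 1 := by
      have := Int.lt_floor_add_one x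
      have := Int.floor_le y
      have : ((⌊x⌋ : ℝ)) = (⌊y⌋ : ℝ) := by exact_mod_cast hxy
      have h1 : x < (⌊x⌋:ℝ) + 1 := Int.lt_floor_add_one x
      have h2 : (⌊y⌋:ℝ) ≤ y := Int.floor_le y
      linarith
    have hy1 : y < x + 1 := by
      have h1 : y < (⌊y⌋:ℝ) + 1 := Int.lt_floor_add_one y
      have h2 : (⌊x⌋:ℝ) ≤ x := Int.floor_le x
      have h3 : ((⌊x⌋ : ℝ)) = (⌊y⌋ : ℝ) := by exact_mod_cast hxy
      linarith
    have : max x y ∈ Set.Icc x (x + 1) ∩ Set.Icc y (y + 1) := by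
      constructor
      · exact ⟨le_max_left _ _, by rcases max_cases x y with ⟨h,_⟩|⟨h,_⟩ <;> simp [h] <;> linarith⟩
      · exact ⟨le_max_right _ _, by rcases max_cases x y with ⟨h,_⟩|⟨h,_⟩ <;> simp [h] <;> linarith⟩
    rw [hdisj] at this
    exact this
  have cardOPT : OPT.card ≤ T.card := by
    calc OPT.card = (OPT.image (fun x : ℝ => ⌊x⌋)).card :=
          (Finset.card_image_of_injOn hinjOPT).symm
      _ ≤ (S.image (fun x : ℝ => ⌊x⌋)).card :=
          Finset.card_le_card (Finset.image_subset_image hOPTsub)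
      _ = (T.image (fun x : ℝ => ⌊x⌋)).card := by rw [hcover]
      _ = T.card := Finset.card_image_of_injOn hone
  set Te := T.filter (fun x => ⌊x⌋ % 2 = 0) with hTe
  set To := T.filter (fun x => ¬ (⌊x⌋ % 2 = 0)) with hTo
  have hsplit : Te.card + To.card = T.card :=
    Finset.card_filter_add_card_filter_not (p := fun x => ⌊x⌋ % 2 = 0)
  have hdisjTe : ∀ x ∈ Te, ∀ y ∈ Te, x ≠ y →
      Set.Icc x (x + 1) ∩ Set.Icc y (y + 1) = ∅ := by
    intro x hx y hy hne
    rw [Finset.mem_filter] at hx hy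
    have hfl : ⌊x⌋ ≠ ⌊y⌋ := fun h => hne (hone hx.1 hy.1 h)
    exact parity_disjoint hfl (hx.2.trans hy.2.symm)
  have hdisjTo : ∀ x ∈ To, ∀ y ∈ To, x ≠ y →
      Set.Icc x (x + 1) ∩ Set.Icc y (y + 1) = ∅ := by
    intro x hx y hy hne
    rw [Finset.mem_filter] at hx hy
    have hfl : ⌊x⌋ ≠ ⌊y⌋ := fun h => hne (hone hx.1 hy.1 h)
    have hx2 : ⌊x⌋ % 2 = 1 := by omega
    have hy2 : ⌊y⌋ % 2 = 1 := by omega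
    exact parity_disjoint hfl (hx2.trans hy2.symm)
  rcases le_total Te.card To.card with h | h
  · exact ⟨To, Finset.filter_subset _ _, hdisjTo, by omega⟩
  · exact ⟨Te, Finset.filter_subset _ _, hdisjTe, by omega⟩
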